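/- Let $X_1, X_2$ be $2$-dimensional real normed spaces and suppose there exists $d \ge 1$ with $d < d_{BM}(X_1, X_2)$ such that $d_{BM}(X_i, \ell_1^2) \le d$ for $i = 1, 2$. Then for every integer $m \ge 2$, $d_{BM}(X_1 \oplus_1 \ell_1^m, X_2 \oplus_1 \ell_1^m) \le d < d_{BM}(X_1, X_2)$. -/

import Mathlib

open scoped ENNReal

/-- The (multiplicative) Banach–Mazur distance between two normed spaces:
the infimum of `‖T‖ * ‖T⁻¹‖` over invertible (continuous) linear maps `T : E → F`. -/
noncomputable def dBM (E F : Type*) [NormedAddCommGroup E] [NormedSpace ℝ E]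
    [NormedAddCommGroup F] [NormedSpace ℝ F] : ℝ :=
  sInf {c : ℝ | ∃ T : E ≃L[ℝ] F, c = ‖(T : E →L[ℝ] F)‖ * ‖(T.symm : F →L[ℝ] E)‖}

set_option synthInstance.maxHeartbeats 1000000
set_option maxHeartbeats 1000000

namespace Stmt17Aux

abbrev L2 : Type := PiLp 1 fun _ : Fin 2 => ℝ
abbrev Lm (m : ℕ) : Type := PiLp 1 fun _ : Fin m => ℝ

variable {m : ℕ}

/-- Projection onto the first two coordinates. -/
def proj (hm : 2 ≤ m) (a : Lm m) : L2 := WithLp.toLp 1 (fun j : Fin 2 => a (Fin.castLE hm j))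

/-- Replace the first two coordinates of `a` by `u`. -/
def comb (hm : 2 ≤ m) (u : L2) (a : Lm m) : Lm m :=
  WithLp.toLp 1 (fun i : Fin m => if h : (i : ℕ) < 2 then u ⟨i, h⟩ else a i)

theorem comb_castLE (hm : 2 ≤ m) (u : L2) (a : Lm m) (j : Fin 2) :
    comb hm u a (Fin.castLE hm j) = u j := by
  have h : ((Fin.castLE hm j : Fin m) : ℕ) < 2 := j.isLt
  simp only [comb, PiLp.toLp_apply, dif_pos h]
  rfl

theorem comb_of_not_lt (hm : 2 ≤ m) (u : L2) (a : Lm m) (i : Fin m)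
    (h : ¬ (i : ℕ) < 2) : comb hm u a i = a i := dif_neg h

theorem proj_comb (hm : 2 ≤ m) (u : L2) (a : Lm m) :
    proj hm (comb hm u a) = u := PiLp.ext fun j => comb_castLE hm u a j

theorem comb_proj (hm : 2 ≤ m) (u : L2) (a : Lm m) :
    comb hm (proj hm a) (comb hm u a) = a := by
  ext i
  by_cases h : (i : ℕ) < 2
  · simp only [comb, PiLp.toLp_apply, dif_pos h, proj]
    exact congrArg a (Fin.ext rfl)
  · simp only [comb, PiLp.toLp_apply, dif_neg h]

variable {E₁ E₂ : Type*} [NormedAddCommGroup E₁] [NormedSpace ℝ E₁]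
  [NormedAddCommGroup E₂] [NormedSpace ℝ E₂]

/-- The rearrangement map `(x, (a, b)) ↦ (T₂⁻¹ a, (T₁ x, b))`. -/
noncomputable def bigLin (hm : 2 ≤ m) (T₁ : E₁ ≃L[ℝ] L2) (T₂ : E₂ ≃L[ℝ] L2) :
    WithLp 1 (E₁ × Lm m) ≃ₗ[ℝ] WithLp 1 (E₂ × Lm m) where
  toFun p := WithLp.toLp 1 (T₂.symm (proj hm p.snd), comb hm (T₁ p.fst) p.snd)
  invFun q := WithLp.toLp 1 (T₁.symm (proj hm q.snd), comb hm (T₂ q.fst) q.snd)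
  map_add' p q := by
    have h1 : proj hm (p.snd + q.snd) = proj hm p.snd + proj hm q.snd := rfl
    refine WithLp.ofLp_injective 1 (Prod.ext ?_ ?_)
    · show T₂.symm (proj hm (p.snd + q.snd)) = T₂.symm (proj hm p.snd) + T₂.symm (proj hm q.snd)
      rw [h1, map_add]
    · show comb hm (T₁ (p.fst + q.fst)) (p.snd + q.snd)
        = comb hm (T₁ p.fst) p.snd + comb hm (T₁ q.fst) q.snd
      ext i
      rw [PiLp.add_apply]
      by_cases h : (i : ℕ) < 2
      · simp only [comb, PiLp.toLp_apply, dif_pos h, map_add, PiLp.add_apply]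
      · simp only [comb, PiLp.toLp_apply, dif_neg h, PiLp.add_apply]
  map_smul' c p := by
    have h1 : proj hm (c • p.snd) = c • proj hm p.snd := rfl
    refine WithLp.ofLp_injective 1 (Prod.ext ?_ ?_)
    · show T₂.symm (proj hm (c • p.snd)) = c • T₂.symm (proj hm p.snd)
      rw [h1, map_smul]
    · show comb hm (T₁ (c • p.fst)) (c • p.snd) = c • comb hm (T₁ p.fst) p.snd
      ext i
      rw [PiLp.smul_apply]
      by_cases h : (i : ℕ) < 2
      · simp only [comb, PiLp.toLp_apply, dif_pos h, map_smul, PiLp.smul_apply]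
      · simp only [comb, PiLp.toLp_apply, dif_neg h, PiLp.smul_apply]
  left_inv p := by
    refine WithLp.ofLp_injective 1 (Prod.ext ?_ ?_)
    · show T₁.symm (proj hm (comb hm (T₁ p.fst) p.snd)) = p.fst
      rw [proj_comb]; exact T₁.symm_apply_apply _
    · show comb hm (T₂ (T₂.symm (proj hm p.snd))) (comb hm (T₁ p.fst) p.snd) = p.snd
      rw [T₂.apply_symm_apply, comb_proj]
  right_inv q := by
    refine WithLp.ofLp_injective 1 (Prod.ext ?_ ?_)
    · show T₂.symm (proj hm (comb hm (T₂ q.fst) q.snd)) = q.fst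
      rw [proj_comb]; exact T₂.symm_apply_apply _
    · show comb hm (T₁ (T₁.symm (proj hm q.snd))) (comb hm (T₂ q.fst) q.snd) = q.snd
      rw [T₁.apply_symm_apply, comb_proj]

theorem bigLin_symm (hm : 2 ≤ m) (T₁ : E₁ ≃L[ℝ] L2) (T₂ : E₂ ≃L[ℝ] L2) :
    (bigLin hm T₁ T₂).symm = bigLin hm T₂ T₁ := rfl

theorem sum_split (hm : 2 ≤ m) (f : Fin m → ℝ) :
    ∑ i, f i = (∑ j : Fin 2, f (Fin.castLE hm j))
      + ∑ i ∈ Finset.univ.filter (fun i : Fin m => ¬ (i : ℕ) < 2), f i := by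
  rw [← Finset.sum_filter_add_sum_filter_not Finset.univ (fun i : Fin m => (i : ℕ) < 2) f]
  congr 1
  have key : Finset.univ.filter (fun i : Fin m => (i : ℕ) < 2)
      = Finset.map (Fin.castLEEmb hm) Finset.univ := by
    ext i
    simp only [Finset.mem_filter, Finset.mem_univ, true_and, Finset.mem_map]
    constructor
    · intro h
      exact ⟨⟨(i : ℕ), h⟩, by ext; rfl⟩
    · rintro ⟨j, rfl⟩
      simpa using j.isLt
  rw [key, Finset.sum_map]
  rfl

theorem norm_bigLin_apply_le (hm : 2 ≤ m) (T₁ : E₁ ≃L[ℝ] L2) (T₂ : E₂ ≃L[ℝ] L2)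
    (p : WithLp 1 (E₁ × Lm m)) :
    ‖bigLin hm T₁ T₂ p‖
      ≤ max (max ‖(T₁ : E₁ →L[ℝ] L2)‖ ‖(T₂.symm : L2 →L[ℝ] E₂)‖) 1 * ‖p‖ := by
  set M : ℝ := max (max ‖(T₁ : E₁ →L[ℝ] L2)‖ ‖(T₂.symm : L2 →L[ℝ] E₂)‖) 1 with hM
  have hM1 : (1 : ℝ) ≤ M := le_max_right _ _
  have hMT₁ : ‖(T₁ : E₁ →L[ℝ] L2)‖ ≤ M := le_trans (le_max_left _ _) (le_max_left _ _)
  have hMT₂ : ‖(T₂.symm : L2 →L[ℝ] E₂)‖ ≤ M := le_trans (le_max_right _ _) (le_max_left _ _)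
  have hp1 : (0 : ℝ) < (1 : ℝ≥0∞).toReal := by simp
  have hn1 : ‖bigLin hm T₁ T₂ p‖ = ‖(bigLin hm T₁ T₂ p).fst‖ + ‖(bigLin hm T₁ T₂ p).snd‖ := by
    rw [WithLp.prod_norm_eq_add hp1]; simp
  have hn2 : ‖p‖ = ‖p.fst‖ + ‖p.snd‖ := by
    rw [WithLp.prod_norm_eq_add hp1]; simp
  rw [hn1, hn2]
  have h2 : (bigLin hm T₁ T₂ p).fst = T₂.symm (proj hm p.snd)
      ∧ (bigLin hm T₁ T₂ p).snd = comb hm (T₁ p.fst) p.snd := ⟨rfl, rfl⟩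
  rw [h2.1, h2.2]
  have hsum : ∀ (a : Lm m), ‖a‖ = ∑ i, ‖a i‖ := by
    intro a
    rw [PiLp.norm_eq_sum hp1]
    simp
  have hsum2 : ∀ (u : L2), ‖u‖ = ∑ j, ‖u j‖ := by
    intro u
    rw [PiLp.norm_eq_sum hp1]
    simp
  set Sf : ℝ := ∑ j : Fin 2, ‖p.snd (Fin.castLE hm j)‖ with hSf
  set Sr : ℝ := ∑ i ∈ Finset.univ.filter (fun i : Fin m => ¬ (i : ℕ) < 2), ‖p.snd i‖ with hSr
  have hSf0 : 0 ≤ Sf := Finset.sum_nonneg fun _ _ => norm_nonneg _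
  have hSr0 : 0 ≤ Sr := Finset.sum_nonneg fun _ _ => norm_nonneg _
  have hpa : ‖p.snd‖ = Sf + Sr := by
    rw [hsum]; exact sum_split hm _
  have hproj : ‖proj hm p.snd‖ = Sf := by
    rw [hsum2]; rfl
  have hcomb : ‖comb hm (T₁ p.fst) p.snd‖ = (∑ j : Fin 2, ‖T₁ p.fst j‖) + Sr := by
    rw [hsum, sum_split hm]
    have e1 : (∑ j : Fin 2, ‖comb hm (T₁ p.fst) p.snd (Fin.castLE hm j)‖)
        = ∑ j : Fin 2, ‖T₁ p.fst j‖ :=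
      Finset.sum_congr rfl fun j _ => by rw [comb_castLE]
    have e2 : (∑ i ∈ Finset.univ.filter (fun i : Fin m => ¬ (i : ℕ) < 2),
          ‖comb hm (T₁ p.fst) p.snd i‖) = Sr :=
      Finset.sum_congr rfl fun i hi => by
        rw [comb_of_not_lt hm _ _ _ (Finset.mem_filter.mp hi).2]
    rw [e1, e2]
  have hT1 : (∑ j : Fin 2, ‖T₁ p.fst j‖) ≤ M * ‖p.fst‖ := by
    have := (T₁ : E₁ →L[ℝ] L2).le_opNorm p.fst
    rw [hsum2] at this
    calc (∑ j : Fin 2, ‖T₁ p.fst j‖) ≤ ‖(T₁ : E₁ →L[ℝ] L2)‖ * ‖p.fst‖ := this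
    _ ≤ M * ‖p.fst‖ := by
        have := norm_nonneg p.fst
        nlinarith
  have hT2 : ‖T₂.symm (proj hm p.snd)‖ ≤ M * Sf := by
    calc ‖T₂.symm (proj hm p.snd)‖
        ≤ ‖(T₂.symm : L2 →L[ℝ] E₂)‖ * ‖proj hm p.snd‖ :=
          (T₂.symm : L2 →L[ℝ] E₂).le_opNorm _
      _ = ‖(T₂.symm : L2 →L[ℝ] E₂)‖ * Sf := by rw [hproj]
      _ ≤ M * Sf := by nlinarith
  rw [hcomb, hpa]
  nlinarith [norm_nonneg p.fst]

theorem dBM_le_of_equivs (hm : 2 ≤ m) (T₁ : E₁ ≃L[ℝ] L2) (T₂ : E₂ ≃L[ℝ] L2) :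
    dBM (WithLp 1 (E₁ × Lm m)) (WithLp 1 (E₂ × Lm m))
      ≤ max (max ‖(T₁ : E₁ →L[ℝ] L2)‖ ‖(T₂.symm : L2 →L[ℝ] E₂)‖) 1
        * max (max ‖(T₂ : E₂ →L[ℝ] L2)‖ ‖(T₁.symm : L2 →L[ℝ] E₁)‖) 1 := by
  haveI : FiniteDimensional ℝ E₁ := T₁.symm.toLinearEquiv.finiteDimensional
  haveI : FiniteDimensional ℝ E₂ := T₂.symm.toLinearEquiv.finiteDimensional
  set S := (bigLin hm T₁ T₂).toContinuousLinearEquiv with hS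
  have hco : ((S : WithLp 1 (E₁ × Lm m) →L[ℝ] WithLp 1 (E₂ × Lm m)) : _ → _)
      = bigLin hm T₁ T₂ := LinearEquiv.coe_toContinuousLinearEquiv' _
  have hco' : ((S.symm : WithLp 1 (E₂ × Lm m) →L[ℝ] WithLp 1 (E₁ × Lm m)) : _ → _)
      = bigLin hm T₂ T₁ := by
    rw [hS]
    rw [show (bigLin hm T₂ T₁ : WithLp 1 (E₂ × Lm m) → WithLp 1 (E₁ × Lm m))
        = ((bigLin hm T₁ T₂).symm : WithLp 1 (E₂ × Lm m) → WithLp 1 (E₁ × Lm m)) by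
      rw [bigLin_symm]]
    exact LinearEquiv.coe_toContinuousLinearEquiv_symm' _
  have h1 : ‖(S : WithLp 1 (E₁ × Lm m) →L[ℝ] WithLp 1 (E₂ × Lm m))‖
      ≤ max (max ‖(T₁ : E₁ →L[ℝ] L2)‖ ‖(T₂.symm : L2 →L[ℝ] E₂)‖) 1 := by
    refine ContinuousLinearMap.opNorm_le_bound _ (le_trans zero_le_one (le_max_right _ _))
      fun p => ?_
    rw [show (S : WithLp 1 (E₁ × Lm m) →L[ℝ] WithLp 1 (E₂ × Lm m)) p
        = bigLin hm T₁ T₂ p from congrFun hco p]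
    exact norm_bigLin_apply_le hm T₁ T₂ p
  have h2 : ‖(S.symm : WithLp 1 (E₂ × Lm m) →L[ℝ] WithLp 1 (E₁ × Lm m))‖
      ≤ max (max ‖(T₂ : E₂ →L[ℝ] L2)‖ ‖(T₁.symm : L2 →L[ℝ] E₁)‖) 1 := by
    refine ContinuousLinearMap.opNorm_le_bound _ (le_trans zero_le_one (le_max_right _ _))
      fun p => ?_
    rw [show (S.symm : WithLp 1 (E₂ × Lm m) →L[ℝ] WithLp 1 (E₁ × Lm m)) p
        = bigLin hm T₂ T₁ p from congrFun hco' p]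
    exact norm_bigLin_apply_le hm T₂ T₁ p
  have hmem : ‖(S : WithLp 1 (E₁ × Lm m) →L[ℝ] WithLp 1 (E₂ × Lm m))‖
      * ‖(S.symm : WithLp 1 (E₂ × Lm m) →L[ℝ] WithLp 1 (E₁ × Lm m))‖
      ∈ {c : ℝ | ∃ T : WithLp 1 (E₁ × Lm m) ≃L[ℝ] WithLp 1 (E₂ × Lm m),
          c = ‖(T : WithLp 1 (E₁ × Lm m) →L[ℝ] WithLp 1 (E₂ × Lm m))‖
            * ‖(T.symm : WithLp 1 (E₂ × Lm m) →L[ℝ] WithLp 1 (E₁ × Lm m))‖} := ⟨S, rfl⟩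
  have hbdd : BddBelow {c : ℝ | ∃ T : WithLp 1 (E₁ × Lm m) ≃L[ℝ] WithLp 1 (E₂ × Lm m),
      c = ‖(T : WithLp 1 (E₁ × Lm m) →L[ℝ] WithLp 1 (E₂ × Lm m))‖
        * ‖(T.symm : WithLp 1 (E₂ × Lm m) →L[ℝ] WithLp 1 (E₁ × Lm m))‖} := by
    refine ⟨0, ?_⟩
    rintro c ⟨T, rfl⟩
    positivity
  refine le_trans (csInf_le hbdd hmem) ?_
  exact mul_le_mul h1 h2 (norm_nonneg _) (le_trans zero_le_one (le_max_right _ _))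

/-- Scaling a continuous linear equivalence into `L2` by a nonzero constant. -/
noncomputable def scaleEquiv {E : Type*} [NormedAddCommGroup E] [NormedSpace ℝ E]
    (T : E ≃L[ℝ] L2) (c : ℝ) (hc : c ≠ 0) : E ≃L[ℝ] L2 :=
  T.trans (LinearEquiv.smulOfNeZero ℝ L2 c hc).toContinuousLinearEquiv

theorem scaleEquiv_coe {E : Type*} [NormedAddCommGroup E] [NormedSpace ℝ E]
    (T : E ≃L[ℝ] L2) (c : ℝ) (hc : c ≠ 0) :
    (scaleEquiv T c hc : E →L[ℝ] L2) = c • (T : E →L[ℝ] L2) := by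
  refine ContinuousLinearMap.ext fun x => ?_
  show (LinearEquiv.smulOfNeZero ℝ L2 c hc).toContinuousLinearEquiv (T x) = c • T x
  rw [LinearEquiv.coe_toContinuousLinearEquiv']
  rfl

theorem scaleEquiv_symm_coe {E : Type*} [NormedAddCommGroup E] [NormedSpace ℝ E]
    (T : E ≃L[ℝ] L2) (c : ℝ) (hc : c ≠ 0) :
    ((scaleEquiv T c hc).symm : L2 →L[ℝ] E) = c⁻¹ • (T.symm : L2 →L[ℝ] E) := by
  refine ContinuousLinearMap.ext fun y => ?_
  show T.symm ((LinearEquiv.smulOfNeZero ℝ L2 c hc).toContinuousLinearEquiv.symm y)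
      = c⁻¹ • T.symm y
  rw [LinearEquiv.coe_toContinuousLinearEquiv_symm']
  show T.symm (c⁻¹ • y) = c⁻¹ • T.symm y
  rw [map_smul]

theorem norm_pos_of_equiv {E : Type*} [NormedAddCommGroup E] [NormedSpace ℝ E]
    [Nontrivial E] (T : E ≃L[ℝ] L2) : 0 < ‖(T : E →L[ℝ] L2)‖ := by
  rcases exists_ne (0 : E) with ⟨x, hx⟩
  have hTx : T x ≠ 0 := fun h => hx (by
    have := T.injective (a₁ := x) (a₂ := 0) (by simpa using h)
    exact this)
  have : (T : E →L[ℝ] L2) ≠ 0 := by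
    intro h
    apply hTx
    rw [show T x = (T : E →L[ℝ] L2) x from rfl, h]
    rfl
  exact norm_pos_iff.mpr this

/-- Given an equivalence with `‖T‖ * ‖T⁻¹‖ < r ^ 2` and `1 ≤ r`, rescale so that
both norms are at most `r`, with the forward norm exactly controlled. -/
theorem exists_scaled {E : Type*} [NormedAddCommGroup E] [NormedSpace ℝ E]
    [Nontrivial E] (T : E ≃L[ℝ] L2) (r : ℝ) (hr : 1 ≤ r)
    (h : ‖(T : E →L[ℝ] L2)‖ * ‖(T.symm : L2 →L[ℝ] E)‖ ≤ r ^ 2) :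
    ∃ T' : E ≃L[ℝ] L2, ‖(T' : E →L[ℝ] L2)‖ ≤ r ∧ ‖(T'.symm : L2 →L[ℝ] E)‖ ≤ r := by
  have hT : 0 < ‖(T : E →L[ℝ] L2)‖ := norm_pos_of_equiv T
  have hr0 : 0 < r := lt_of_lt_of_le one_pos hr
  set c : ℝ := r / ‖(T : E →L[ℝ] L2)‖ with hc
  have hc0 : c ≠ 0 := ne_of_gt (div_pos hr0 hT)
  refine ⟨scaleEquiv T c hc0, ?_, ?_⟩
  · rw [scaleEquiv_coe]
    have hns := norm_smul c (T : E →L[ℝ] L2)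
    rw [hns, Real.norm_eq_abs, abs_of_pos (div_pos hr0 hT)]
    exact le_of_eq (div_mul_cancel₀ _ (ne_of_gt hT))
  · rw [scaleEquiv_symm_coe]
    have hns := norm_smul c⁻¹ ((T.symm : L2 →L[ℝ] E))
    rw [hns, Real.norm_eq_abs, abs_of_pos (inv_pos.mpr (div_pos hr0 hT))]
    rw [inv_div]
    rw [div_mul_eq_mul_div]
    rw [div_le_iff₀ hr0]
    nlinarith [norm_nonneg (T.symm : L2 →L[ℝ] E)]

theorem finrank_L2 : Module.finrank ℝ L2 = 2 := by
  have e := WithLp.linearEquiv 1 ℝ (∀ _ : Fin 2, ℝ)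
  rw [e.finrank_eq]
  simp

end Stmt17Aux

open Stmt17Aux in
/-- if both `X₁, X₂` are within distance `d < d_BM(X₁,X₂)` of `ℓ₁²`,
then for `m ≥ 2` the distance between the `ℓ₁`-sums with `ℓ₁ᵐ` is at most `d`. -/
theorem stmt_17 (X₁ X₂ : Type)
    [NormedAddCommGroup X₁] [NormedSpace ℝ X₁] [NormedAddCommGroup X₂] [NormedSpace ℝ X₂]
    (h₁ : Module.finrank ℝ X₁ = 2) (h₂ : Module.finrank ℝ X₂ = 2)
    (d : ℝ) (hd : 1 ≤ d) (hlt : d < dBM X₁ X₂)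
    (hd₁ : dBM X₁ (PiLp 1 fun _ : Fin 2 => ℝ) ≤ d)
    (hd₂ : dBM X₂ (PiLp 1 fun _ : Fin 2 => ℝ) ≤ d)
    (m : ℕ) (hm : 2 ≤ m) :
    dBM (WithLp 1 (X₁ × PiLp 1 fun _ : Fin m => ℝ))
        (WithLp 1 (X₂ × PiLp 1 fun _ : Fin m => ℝ)) ≤ d := by
  haveI : FiniteDimensional ℝ X₁ := FiniteDimensional.of_finrank_eq_succ h₁
  haveI : FiniteDimensional ℝ X₂ := FiniteDimensional.of_finrank_eq_succ h₂
  haveI : Nontrivial X₁ := Module.nontrivial_of_finrank_pos (R := ℝ) (by rw [h₁]; norm_num)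
  haveI : Nontrivial X₂ := Module.nontrivial_of_finrank_pos (R := ℝ) (by rw [h₂]; norm_num)
  -- nonemptiness of the distance sets
  have e₁ : X₁ ≃L[ℝ] L2 :=
    (LinearEquiv.ofFinrankEq X₁ L2 (by rw [h₁, finrank_L2])).toContinuousLinearEquiv
  have e₂ : X₂ ≃L[ℝ] L2 :=
    (LinearEquiv.ofFinrankEq X₂ L2 (by rw [h₂, finrank_L2])).toContinuousLinearEquiv
  -- it suffices to prove `≤ d + ε` for all `ε > 0`
  refine le_of_forall_pos_le_add fun ε hε => ?_
  set r : ℝ := Real.sqrt (d + ε) with hr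
  have hde : (0:ℝ) < d + ε := by linarith
  have hr1 : 1 ≤ r := by
    rw [hr, show (1:ℝ) = Real.sqrt 1 from (Real.sqrt_one).symm]
    exact Real.sqrt_le_sqrt (by linarith)
  have hr2 : r ^ 2 = d + ε := Real.sq_sqrt (le_of_lt hde)
  -- extract good equivalences
  obtain ⟨c₁, ⟨T₁, rfl⟩, hc₁⟩ := exists_lt_of_csInf_lt (s := {c : ℝ | ∃ T : X₁ ≃L[ℝ] L2,
      c = ‖(T : X₁ →L[ℝ] L2)‖ * ‖(T.symm : L2 →L[ℝ] X₁)‖}) ⟨_, e₁, rfl⟩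
    (lt_of_le_of_lt hd₁ (by linarith : d < d + ε))
  obtain ⟨c₂, ⟨T₂, rfl⟩, hc₂⟩ := exists_lt_of_csInf_lt (s := {c : ℝ | ∃ T : X₂ ≃L[ℝ] L2,
      c = ‖(T : X₂ →L[ℝ] L2)‖ * ‖(T.symm : L2 →L[ℝ] X₂)‖}) ⟨_, e₂, rfl⟩
    (lt_of_le_of_lt hd₂ (by linarith : d < d + ε))
  obtain ⟨T₁', hT₁, hT₁s⟩ := exists_scaled T₁ r hr1 (by rw [hr2]; linarith)
  obtain ⟨T₂', hT₂, hT₂s⟩ := exists_scaled T₂ r hr1 (by rw [hr2]; linarith)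
  have hkey := dBM_le_of_equivs hm T₁' T₂'
  have hm1 : max (max ‖(T₁' : X₁ →L[ℝ] L2)‖ ‖(T₂'.symm : L2 →L[ℝ] X₂)‖) 1 ≤ r :=
    max_le (max_le hT₁ hT₂s) hr1
  have hm2 : max (max ‖(T₂' : X₂ →L[ℝ] L2)‖ ‖(T₁'.symm : L2 →L[ℝ] X₁)‖) 1 ≤ r :=
    max_le (max_le hT₂ hT₁s) hr1
  calc dBM (WithLp 1 (X₁ × PiLp 1 fun _ : Fin m => ℝ))
        (WithLp 1 (X₂ × PiLp 1 fun _ : Fin m => ℝ))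
      ≤ max (max ‖(T₁' : X₁ →L[ℝ] L2)‖ ‖(T₂'.symm : L2 →L[ℝ] X₂)‖) 1
        * max (max ‖(T₂' : X₂ →L[ℝ] L2)‖ ‖(T₁'.symm : L2 →L[ℝ] X₁)‖) 1 := hkey
    _ ≤ r * r := by
        refine mul_le_mul hm1 hm2 (le_trans zero_le_one (le_max_right _ _)) ?_
        linarith
    _ = d + ε := by rw [← hr2]; ring
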